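/- Let r_X, r_Z, m be natural numbers with r_X ≤ m − 1. Then the CSS condition RM(r_X,m)^⊥ ⊆ RM(r_Z,m) holds if and only if m ≤ r_X + r_Z + 1. -/

import Mathlib

open MvPolynomial

/-- The Reed–Muller code `RM(r, m)`: the `𝔽₂`-linear subspace of functions
`(ZMod 2)^m → ZMod 2` consisting of evaluation vectors of `m`-variate polynomials over
`ZMod 2` of total degree at most `r`. -/
def RM (r m : ℕ) : Submodule (ZMod 2) ((Fin m → ZMod 2) → ZMod 2) where
  carrier := {f | ∃ p : MvPolynomial (Fin m) (ZMod 2),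
    p.totalDegree ≤ r ∧ ∀ x, f x = eval x p}
  zero_mem' := ⟨0, by simp, by simp⟩
  add_mem' := by
    rintro f g ⟨p, hp, hf⟩ ⟨q, hq, hg⟩
    exact ⟨p + q, le_trans (totalDegree_add p q) (max_le hp hq),
      fun x => by simp [hf x, hg x]⟩
  smul_mem' := by
    rintro c f ⟨p, hp, hf⟩
    refine ⟨c • p, le_trans (totalDegree_smul_le c p) hp, fun x => by simp [hf x]⟩


/-- The dual code of a subspace `C` of functions `(ZMod 2)^m → ZMod 2`, with respect to the
bilinear form `⟨u, v⟩ = ∑ x, u x * v x` over `ZMod 2`. -/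
def dualCode {m : ℕ} (C : Submodule (ZMod 2) ((Fin m → ZMod 2) → ZMod 2)) :
    Submodule (ZMod 2) ((Fin m → ZMod 2) → ZMod 2) where
  carrier := {v | ∀ u ∈ C, ∑ x : Fin m → ZMod 2, u x * v x = 0}
  zero_mem' := by intro u _; simp
  add_mem' := by
    intro v w hv hw u hu
    simpa [mul_add, Finset.sum_add_distrib] using by rw [hv u hu, hw u hu, add_zero]
  smul_mem' := by
    intro c v hv u hu
    simp only [Pi.smul_apply, smul_eq_mul, mul_left_comm, ← Finset.mul_sum]
    rw [hv u hu, mul_zero]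

open Finset

lemma RM_zmod2_sum (f : ZMod 2 → ZMod 2) : ∑ t : ZMod 2, f t = f 0 + f 1 := by
  have : (Finset.univ : Finset (ZMod 2)) = {0, 1} := by decide
  rw [this]; simp [Finset.sum_pair (by decide : (0:ZMod 2) ≠ 1)]

lemma RM_sum_prod_eq {m : ℕ} (g : Fin m → ZMod 2 → ZMod 2) :
    ∑ x : Fin m → ZMod 2, ∏ i, g i (x i) = ∏ i, ∑ t : ZMod 2, g i t := by
  rw [Finset.prod_univ_sum]
  simp [Fintype.piFinset_univ]

lemma RM_sum_eval_eq_zero {m : ℕ} (p : MvPolynomial (Fin m) (ZMod 2))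
    (hp : p.totalDegree < m) : ∑ x : Fin m → ZMod 2, eval x p = 0 := by
  have heval : ∀ x : Fin m → ZMod 2, eval x p
      = ∑ a ∈ p.support, coeff a p * ∏ i, x i ^ a i := fun x => eval_eq' x p
  simp only [heval]
  rw [Finset.sum_comm]
  refine Finset.sum_eq_zero fun a ha => ?_
  simp only [← Finset.mul_sum]
  have hex : ∃ i, a i = 0 := by
    by_contra hc
    push_neg at hc
    have h1 : m ≤ ∑ i, a i := by
      calc m = ∑ _i : Fin m, 1 := by simp
        _ ≤ ∑ i, a i := Finset.sum_le_sum fun i _ => Nat.one_le_iff_ne_zero.2 (hc i)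
    have h2 : (∑ i, a i) ≤ p.totalDegree := by
      have := MvPolynomial.le_totalDegree ha
      rwa [Finsupp.sum_fintype _ _ (fun _ => rfl)] at this
    omega
  obtain ⟨i, hi⟩ := hex
  rw [RM_sum_prod_eq (fun i t => t ^ a i)]
  rw [Finset.prod_eq_zero (Finset.mem_univ i) (by rw [hi]; decide), mul_zero]

lemma RM_interp {m : ℕ} (v : (Fin m → ZMod 2) → ZMod 2) (x : Fin m → ZMod 2) :
    v x = ∑ S : Finset (Fin m),
      (∑ y : Fin m → ZMod 2, (∏ i ∈ Sᶜ, (1 + y i)) * v y) * ∏ i ∈ S, x i := by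
  have key : ∀ y : Fin m → ZMod 2,
      ∑ S : Finset (Fin m), (∏ i ∈ S, x i) * ∏ i ∈ Sᶜ, (1 + y i)
        = if y = x then 1 else 0 := by
    intro y
    have hprod : ∏ i : Fin m, (x i + (1 + y i))
        = ∑ S ∈ (Finset.univ : Finset (Fin m)).powerset,
            (∏ i ∈ S, x i) * ∏ i ∈ Finset.univ \ S, (1 + y i) := Finset.prod_add _ _ _
    rw [Finset.powerset_univ] at hprod
    simp only [← Finset.compl_eq_univ_sdiff] at hprod
    rw [← hprod]
    by_cases hxy : y = x
    · subst hxy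
      rw [Finset.prod_eq_one fun i _ => by
        have : ∀ a : ZMod 2, a + (1 + a) = 1 := by decide
        exact this (y i)]
      simp
    · have : ∃ i, y i ≠ x i := by
        by_contra hc; push_neg at hc; exact hxy (funext hc)
      obtain ⟨i, hi⟩ := this
      rw [if_neg hxy]
      refine Finset.prod_eq_zero (Finset.mem_univ i) ?_
      have : ∀ a b : ZMod 2, a ≠ b → b + (1 + a) = 0 := by decide
      exact this _ _ hi
  calc v x = ∑ y : Fin m → ZMod 2, v y * if y = x then 1 else 0 := by
        simp [mul_ite]
    _ = ∑ y : Fin m → ZMod 2, v y *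
          ∑ S : Finset (Fin m), (∏ i ∈ S, x i) * ∏ i ∈ Sᶜ, (1 + y i) := by
        simp only [key]
    _ = _ := by
        simp only [Finset.mul_sum]
        rw [Finset.sum_comm]
        refine Finset.sum_congr rfl fun S _ => ?_
        rw [Finset.sum_mul]
        refine Finset.sum_congr rfl fun y _ => ?_
        ring

lemma RMdeg_prod_X {m : ℕ} (S : Finset (Fin m)) :
    (∏ i ∈ S, (X i : MvPolynomial (Fin m) (ZMod 2))).totalDegree ≤ S.card := by
  refine le_trans (totalDegree_finset_prod S _) ?_
  calc ∑ i ∈ S, (X i : MvPolynomial (Fin m) (ZMod 2)).totalDegree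
      ≤ ∑ _i ∈ S, 1 := Finset.sum_le_sum fun i _ => le_of_eq (totalDegree_X i)
    _ = S.card := by simp

lemma RMdeg_prod_oneX {m : ℕ} (S : Finset (Fin m)) :
    (∏ i ∈ S, (1 + X i : MvPolynomial (Fin m) (ZMod 2))).totalDegree ≤ S.card := by
  refine le_trans (totalDegree_finset_prod S _) ?_
  calc ∑ i ∈ S, (1 + X i : MvPolynomial (Fin m) (ZMod 2)).totalDegree
      ≤ ∑ _i ∈ S, 1 := Finset.sum_le_sum fun i _ => by
        refine le_trans (totalDegree_add _ _) ?_
        simp [totalDegree_one, totalDegree_X]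
    _ = S.card := by simp

theorem stmt_4 (rX rZ m : ℕ) (h : rX + 1 ≤ m) :
    dualCode (RM rX m) ≤ RM rZ m ↔ m ≤ rX + rZ + 1 := by
  constructor
  · intro hd
    by_contra hlt
    push_neg at hlt
    obtain ⟨S, -, hScard⟩ := Finset.exists_subset_card_eq (s := (Finset.univ : Finset (Fin m)))
      (n := rZ + 1) (by simpa using by omega)
    set v : (Fin m → ZMod 2) → ZMod 2 := fun x => ∏ i ∈ S, x i with hvdef
    have hv : v ∈ dualCode (RM rX m) := by
      intro u hu
      obtain ⟨p, hp, hup⟩ := hu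
      have : ∀ x : Fin m → ZMod 2, u x * v x = eval x (p * ∏ i ∈ S, X i) := by
        intro x
        simp [hup x, hvdef, eval_prod]
      simp only [this]
      refine RM_sum_eval_eq_zero _ ?_
      refine lt_of_le_of_lt (totalDegree_mul _ _) ?_
      have := RMdeg_prod_X S
      omega
    obtain ⟨q, hq, hvq⟩ := hd hv
    have hSc : Sᶜ.card = m - (rZ + 1) := by
      rw [Finset.card_compl, hScard]; simp
    have h1 : ∑ x : Fin m → ZMod 2, eval x ((∏ i ∈ Sᶜ, (1 + X i)) * q) = 0 := by
      refine RM_sum_eval_eq_zero _ ?_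
      refine lt_of_le_of_lt (totalDegree_mul _ _) ?_
      have := RMdeg_prod_oneX Sᶜ
      omega
    have h2 : ∑ x : Fin m → ZMod 2, eval x ((∏ i ∈ Sᶜ, (1 + X i)) * q) = 1 := by
      have step : ∀ x : Fin m → ZMod 2, eval x ((∏ i ∈ Sᶜ, (1 + X i)) * q)
          = ∏ i : Fin m, (if i ∈ S then x i else 1 + x i) := by
        intro x
        rw [map_mul, eval_prod, ← hvq x, hvdef]
        rw [← Finset.prod_mul_prod_compl S (fun i => if i ∈ S then x i else 1 + x i)]
        simp only [map_add, map_one, eval_X]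
        rw [Finset.prod_congr rfl (fun i hi => if_pos hi),
          Finset.prod_congr rfl (fun i (hi : i ∈ Sᶜ) =>
            if_neg (Finset.mem_compl.1 hi))]
        ring
      simp only [step]
      rw [RM_sum_prod_eq (fun i t => if i ∈ S then t else 1 + t)]
      refine Finset.prod_eq_one fun i _ => ?_
      by_cases hi : i ∈ S <;> simp [hi, RM_zmod2_sum] <;> decide
    rw [h1] at h2
    exact one_ne_zero h2.symm
  · intro hm v hv
    set c : Finset (Fin m) → ZMod 2 :=
      fun S => ∑ y : Fin m → ZMod 2, (∏ i ∈ Sᶜ, (1 + y i)) * v y with hcdef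
    have hc0 : ∀ S : Finset (Fin m), rZ + 1 ≤ S.card → c S = 0 := by
      intro S hS
      have hu : (fun y : Fin m → ZMod 2 => ∏ i ∈ Sᶜ, (1 + y i)) ∈ RM rX m := by
        refine ⟨∏ i ∈ Sᶜ, (1 + X i), ?_, fun y => by simp [eval_prod]⟩
        refine le_trans (RMdeg_prod_oneX Sᶜ) ?_
        rw [Finset.card_compl]
        simp only [Fintype.card_fin]
        omega
      exact hv _ hu
    refine ⟨∑ S ∈ Finset.univ.filter (fun S : Finset (Fin m) => S.card ≤ rZ),
      C (c S) * ∏ i ∈ S, X i, ?_, ?_⟩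
    · refine le_trans (totalDegree_finset_sum _ _) ?_
      refine Finset.sup_le fun S hS => ?_
      refine le_trans (totalDegree_mul _ _) ?_
      rw [totalDegree_C]
      have := RMdeg_prod_X S
      have := (Finset.mem_filter.1 hS).2
      omega
    · intro x
      rw [map_sum]
      simp only [map_mul, eval_C, eval_prod, eval_X]
      have hvx : v x = ∑ S : Finset (Fin m), c S * ∏ i ∈ S, x i := RM_interp v x
      have hz : ∑ S ∈ Finset.univ.filter (fun S : Finset (Fin m) => ¬ S.card ≤ rZ),
          c S * ∏ i ∈ S, x i = 0 :=
        Finset.sum_eq_zero fun S hS => by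
          have h2 := (Finset.mem_filter.1 hS).2
          rw [hc0 S (by omega), zero_mul]
      rw [hvx, ← Finset.sum_filter_add_sum_filter_not Finset.univ
        (fun S : Finset (Fin m) => S.card ≤ rZ)
        (fun S => c S * ∏ i ∈ S, x i), hz, add_zero]
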